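/- Let Γ be a finite group and T a right Γ-graph. If (K,L) is an r-NDR pair of Γ-simplicial complexes, then (A_T(K), A_T(L)) is an r-NDR pair of graphs. -/

import Mathlib

/-- An abstract simplicial complex on the vertex type `V`: a family of finite subsets of `V`
closed under taking subsets. -/
structure Cplx (V : Type*) where
  faces : Set (Set V)
  finite_mem : ∀ σ ∈ faces, Set.Finite σ
  down_closed : ∀ σ ∈ faces, ∀ τ ⊆ σ, τ ∈ faces

/-- The vertex set of a simplicial complex. -/
def Cplx.verts {V : Type*} (K : Cplx V) : Set V := {v | ({v} : Set V) ∈ K.faces}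

/-- `a` is an action of the group `Γ` on the vertex type of `K` by simplicial automorphisms. -/
def IsCplxAction (Γ : Type*) [Group Γ] {V : Type*} (a : Γ → V → V) (K : Cplx V) : Prop :=
  (∀ v, a 1 v = v) ∧ (∀ γ γ' : Γ, ∀ v, a (γ * γ') v = a γ (a γ' v)) ∧
    ∀ γ : Γ, ∀ σ ∈ K.faces, (a γ) '' σ ∈ K.faces

/-- A simplicial multi-map from `K` to `L`: it assigns to each vertex of `K` a nonempty subset
of the vertices of `L`, so that `⋃ v ∈ σ, η v` is a simplex of `L` for every simplex `σ` of
`K`. -/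
def IsMultiMap {V W : Type*} (K : Cplx V) (L : Cplx W) (η : V → Set W) : Prop :=
  (∀ v ∈ K.verts, (η v).Nonempty) ∧ ∀ σ ∈ K.faces, (⋃ v ∈ σ, η v) ∈ L.faces

/-- A Γ-equivariant simplicial multi-map, i.e. an element of `Map_Γ(K, L)`. -/
def IsEquivMultiMap (Γ : Type*) [Group Γ] {V W : Type*} (a : Γ → V → V) (b : Γ → W → W)
    (K : Cplx V) (L : Cplx W) (η : V → Set W) : Prop :=
  IsMultiMap K L η ∧ ∀ γ : Γ, ∀ v ∈ K.verts, η (a γ v) = (b γ) '' (η v)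

/-- Pointwise order on multi-maps out of `K` (on the vertices of `K`). -/
def mmLE {V W : Type*} (K : Cplx V) (η η' : V → Set W) : Prop := ∀ v ∈ K.verts, η v ⊆ η' v

/-- An element of `Def_Γ(K, L)`: a Γ-equivariant simplicial multi-map `K → K` with
`η v = {v}` for every vertex `v` of the subcomplex `L`. -/
def IsDefMultiMap (Γ : Type*) [Group Γ] {V : Type*} (a : Γ → V → V) (K L : Cplx V)
    (η : V → Set V) : Prop :=
  IsEquivMultiMap Γ a a K K η ∧ ∀ v ∈ L.verts, η v = {v}

/-- One step of a zigzag in `Def_Γ(K, L)`: both multi-maps lie in `Def_Γ(K, L)` and they are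
comparable. -/
def cplxDefStep (Γ : Type*) [Group Γ] {V : Type*} (a : Γ → V → V) (K L : Cplx V)
    (η η' : V → Set V) : Prop :=
  IsDefMultiMap Γ a K L η ∧ IsDefMultiMap Γ a K L η' ∧ (mmLE K η η' ∨ mmLE K η' η)

/-- The Γ-simplicial complex `K` strongly Γ-collapses to its Γ-subcomplex `L`: there is a
simplicial map `f` belonging to the identity component of `Def_Γ(K, L)` (joined to the
identity by a finite zigzag of pairwise comparable elements) whose image is contained in
`L`. -/
def CplxCollapses (Γ : Type*) [Group Γ] {V : Type*} (a : Γ → V → V) (K L : Cplx V) : Prop :=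
  ∃ f : V → V, IsDefMultiMap Γ a K L (fun v => {f v}) ∧
    Relation.ReflTransGen (cplxDefStep Γ a K L) (fun v => {v}) (fun v => {f v}) ∧
    ∀ σ ∈ K.faces, f '' σ ∈ L.faces
/-- The neighborhood `ν_K(L) = ⋃_{v ∈ V(L)} st_K(v)` of the subcomplex `L` in `K`. -/
def nbhd {V : Type*} (K L : Cplx V) : Cplx V where
  faces := {σ | ∃ v ∈ L.verts, insert v σ ∈ K.faces}
  finite_mem := fun σ h => by
    obtain ⟨v, -, h⟩ := h
    exact (K.finite_mem _ h).subset (Set.subset_insert _ _)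
  down_closed := fun σ h τ hτσ => by
    obtain ⟨v, hv, h⟩ := h
    exact ⟨v, hv, K.down_closed _ h _ (Set.insert_subset_insert hτσ)⟩

/-- The iterated neighborhood `ν^r_K(L)` (with `ν^0_K(L) = L`). -/
def nbhdIter {V : Type*} (K L : Cplx V) : ℕ → Cplx V
  | 0 => L
  | r + 1 => nbhd K (nbhdIter K L r)

/-- `(K, L)` is an `r`-NDR pair of Γ-simplicial complexes: there is a Γ-subcomplex `A` of `K`
containing `ν^r_K(L)` (and `L`) which strongly Γ-collapses to `L`. -/
def IsNDRPair (Γ : Type*) [Group Γ] {V : Type*} (a : Γ → V → V) (K L : Cplx V) (r : ℕ) : Prop :=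
  ∃ A : Cplx V, A.faces ⊆ K.faces ∧ L.faces ⊆ A.faces ∧
    (∀ γ : Γ, ∀ σ ∈ A.faces, (a γ) '' σ ∈ A.faces) ∧
    (nbhdIter K L r).faces ⊆ A.faces ∧ CplxCollapses Γ a A L

/-- A graph: a symmetric (loops allowed) adjacency relation on the vertex type `V`. -/
structure SymGraph (V : Type*) where
  Adj : V → V → Prop
  symm : ∀ v w, Adj v w → Adj w v

/-- A graph homomorphism from `G` to `H`. -/
def IsGraphHom {V W : Type*} (G : SymGraph V) (H : SymGraph W) (f : V → W) : Prop :=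
  ∀ v w, G.Adj v w → H.Adj (f v) (f w)

/-- A multi-homomorphism from `G` to `H`: it assigns to each vertex of `G` a nonempty set of
vertices of `H` so that adjacent vertices have completely adjacent images.  The
multi-homomorphisms, ordered pointwise by inclusion, form the Hom complex `Hom(G, H)`. -/
def IsMultiHom {V W : Type*} (G : SymGraph V) (H : SymGraph W) (η : V → Set W) : Prop :=
  (∀ v, (η v).Nonempty) ∧ ∀ v w, G.Adj v w → ∀ x ∈ η v, ∀ y ∈ η w, H.Adj x y

/-- One step of a zigzag in `Hom(G, H)`: both multi-homomorphisms are comparable. -/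
def mhStep {V W : Type*} (G : SymGraph V) (H : SymGraph W) (η η' : V → Set W) : Prop :=
  IsMultiHom G H η ∧ IsMultiHom G H η' ∧ ((∀ v, η v ⊆ η' v) ∨ (∀ v, η' v ⊆ η v))

/-- Two graph homomorphisms are ×-homotopic iff they lie in the same connected component of
the Hom complex `Hom(G, H)`. -/
def XHomotopic {V W : Type*} (G : SymGraph V) (H : SymGraph W) (f g : V → W) : Prop :=
  Relation.ReflTransGen (mhStep G H) (fun v => {f v}) (fun v => {g v})

/-- `f : G → H` is a ×-homotopy equivalence. -/
def IsXHomotopyEquiv {V W : Type*} (G : SymGraph V) (H : SymGraph W) (f : V → W) : Prop :=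
  IsGraphHom G H f ∧ ∃ h : W → V, IsGraphHom H G h ∧
    XHomotopic G G (h ∘ f) id ∧ XHomotopic H H (f ∘ h) id
/-- An element of `Def(G, H)`, where `H` is the induced subgraph of `G` on `S`: a
multi-homomorphism `η : G → G` with `η w = {w}` for every vertex `w` of `H`. -/
def IsDefMultiHom {V : Type*} (G : SymGraph V) (S : Set V) (η : V → Set V) : Prop :=
  IsMultiHom G G η ∧ ∀ w ∈ S, η w = {w}

/-- One step of a zigzag in `Def(G, H)`. -/
def defMHStep {V : Type*} (G : SymGraph V) (S : Set V) (η η' : V → Set V) : Prop :=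
  IsDefMultiHom G S η ∧ IsDefMultiHom G S η' ∧ ((∀ v, η v ⊆ η' v) ∨ (∀ v, η' v ⊆ η v))

/-- The induced subgraph of `G` on `S` is a ×-homotopy deformation retract of `G`: there is a
graph homomorphism `f` in the identity component of `Def(G, H)` with `f v ∈ S` for every
vertex `v` of `G`. -/
def IsXDefRetract {V : Type*} (G : SymGraph V) (S : Set V) : Prop :=
  ∃ f : V → V, IsDefMultiHom G S (fun v => {f v}) ∧
    Relation.ReflTransGen (defMHStep G S) (fun v => {v}) (fun v => {f v}) ∧
    ∀ v, f v ∈ S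
/-- A subgraph of `G`: a set of vertices together with a symmetric set of edges of `G`. -/
structure Subgraph {V : Type*} (G : SymGraph V) where
  verts : Set V
  Adj : V → V → Prop
  adj_sub : ∀ v w, Adj v w → G.Adj v w
  symm : ∀ v w, Adj v w → Adj w v

/-- Containment of subgraphs of `G`. -/
def Subgraph.le {V : Type*} {G : SymGraph V} (H H' : Subgraph G) : Prop :=
  H.verts ⊆ H'.verts ∧ ∀ v w, H.Adj v w → H'.Adj v w

/-- The neighborhood `ν_G(H)` of the subgraph `H` of `G`: its vertices are the vertices of `G`
adjacent to some vertex of `H`, and its edges are the edges of `G` with at least one endpoint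
in `H`. -/
def gnbhd {V : Type*} (G : SymGraph V) (H : Subgraph G) : Subgraph G where
  verts := {v | ∃ w ∈ H.verts, G.Adj v w}
  Adj v w := G.Adj v w ∧ (v ∈ H.verts ∨ w ∈ H.verts)
  adj_sub := fun _ _ h => h.1
  symm := fun _ _ h => ⟨G.symm _ _ h.1, h.2.symm⟩

/-- The iterated neighborhood `ν^r_G(H)` (with `ν^0_G(H) = H`). -/
def gnbhdIter {V : Type*} (G : SymGraph V) (H : Subgraph G) : ℕ → Subgraph G
  | 0 => H
  | r + 1 => gnbhd G (gnbhdIter G H r)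
/-- A subgraph of `G` regarded as a graph in its own right (on its vertex set). -/
def Subgraph.coe {V : Type*} {G : SymGraph V} (H : Subgraph G) : SymGraph H.verts where
  Adj x y := H.Adj x y
  symm := fun x y h => H.symm _ _ h

/-- `(G, H)` is an `r`-NDR pair of graphs: there is a subgraph `H'` of `G` containing `H` and
`ν^r_G(H)` such that `H` is a ×-homotopy deformation retract of `H'`. -/
def GraphNDRPair {V : Type*} (G : SymGraph V) (H : Subgraph G) (r : ℕ) : Prop :=
  ∃ H' : Subgraph G, Subgraph.le H H' ∧ Subgraph.le (gnbhdIter G H r) H' ∧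
    IsXDefRetract H'.coe {x : H'.verts | (x : V) ∈ H.verts}
/-- `ρ` is a right action of the group `Γ` on the graph `T` by graph automorphisms. -/
def IsRightGraphAction (Γ : Type*) [Group Γ] {VT : Type*} (T : SymGraph VT)
    (ρ : Γ → VT → VT) : Prop :=
  (∀ x, ρ 1 x = x) ∧ (∀ γ γ' : Γ, ∀ x, ρ (γ * γ') x = ρ γ' (ρ γ x)) ∧
    ∀ γ : Γ, IsGraphHom T T (ρ γ)

/-- The orbit relation generating the quotient `Γ\(T × A(K))`: `γ·(x, v) = (xγ⁻¹, γv)`. -/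
def ATrel {Γ VT VK : Type*} [Group Γ] (ρ : Γ → VT → VT) (a : Γ → VK → VK)
    (p q : VT × VK) : Prop :=
  ∃ γ : Γ, q = (ρ γ⁻¹ p.1, a γ p.2)

/-- The graph `A_T(K) = Γ\(T × A(K))`: the vertices are the Γ-orbits of pairs of a vertex of
`T` and a vertex of `K`, and two orbits are adjacent iff they contain adjacent
representatives, a pair `(x, v)`, `(y, w)` being adjacent in `T × A(K)` iff `x`, `y` are
adjacent in `T` and `{v, w}` is a simplex of `K`. -/
def ATgraph {Γ VT VK : Type*} [Group Γ] (T : SymGraph VT) (ρ : Γ → VT → VT)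
    (K : Cplx VK) (a : Γ → VK → VK) : SymGraph (Quot (ATrel ρ a)) where
  Adj c d := ∃ p q : VT × VK, Quot.mk (ATrel ρ a) p = c ∧ Quot.mk (ATrel ρ a) q = d ∧
    T.Adj p.1 q.1 ∧ ({p.2, q.2} : Set VK) ∈ K.faces
  symm := by
    rintro c d ⟨p, q, hp, hq, hT, hK⟩
    exact ⟨q, p, hq, hp, T.symm _ _ hT, by rwa [Set.pair_comm]⟩

/-- The vertex set of `A_T(L)` inside `A_T(K)` (for a subcomplex `L` of `K`): the orbits of
pairs whose second component is a vertex of `L`. -/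
def ATverts {Γ VT VK : Type*} [Group Γ] (ρ : Γ → VT → VT) (a : Γ → VK → VK)
    (L : Cplx VK) : Set (Quot (ATrel ρ a)) :=
  {c | ∃ p : VT × VK, Quot.mk (ATrel ρ a) p = c ∧ p.2 ∈ L.verts}
theorem nbhdIter_faces_subset {V : Type*} {K L : Cplx V} (hLK : L.faces ⊆ K.faces) :
    ∀ r : ℕ, (nbhdIter K L r).faces ⊆ K.faces
  | 0 => hLK
  | r + 1 => fun σ hσ => by
      obtain ⟨v, -, h⟩ := hσ
      exact K.down_closed _ h _ (Set.subset_insert _ _)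

/-- For a subcomplex `L` of `K`, the graph `A_T(L)` regarded as a subgraph of `A_T(K)`. -/
def ATsubgraph {Γ VT VK : Type*} [Group Γ] (T : SymGraph VT) (ρ : Γ → VT → VT)
    (K : Cplx VK) (a : Γ → VK → VK) (L : Cplx VK) (hLK : L.faces ⊆ K.faces) :
    Subgraph (ATgraph T ρ K a) where
  verts := ATverts ρ a L
  Adj c d := ∃ p q : VT × VK, Quot.mk (ATrel ρ a) p = c ∧ Quot.mk (ATrel ρ a) q = d ∧
    T.Adj p.1 q.1 ∧ ({p.2, q.2} : Set VK) ∈ L.faces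
  adj_sub := by
    rintro c d ⟨p, q, hp, hq, hT, hL⟩
    exact ⟨p, q, hp, hq, hT, hLK hL⟩
  symm := by
    rintro c d ⟨p, q, hp, hq, hT, hL⟩
    exact ⟨q, p, hq, hp, T.symm _ _ hT, by rwa [Set.pair_comm]⟩


section AuxNDR

variable {Γ VT VK : Type*} [Group Γ] {T : SymGraph VT} {ρ : Γ → VT → VT}
  {K : Cplx VK} {a : Γ → VK → VK}

theorem atrel_equivalence (hρ1 : ∀ x, ρ 1 x = x)
    (hρm : ∀ γ γ' : Γ, ∀ x, ρ (γ * γ') x = ρ γ' (ρ γ x))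
    (ha1 : ∀ v, a 1 v = v) (ham : ∀ γ γ' : Γ, ∀ v, a (γ * γ') v = a γ (a γ' v)) :
    Equivalence (ATrel ρ a) := by
  constructor
  · intro p
    refine ⟨1, ?_⟩
    rw [inv_one, hρ1, ha1]
  · rintro p q ⟨γ, rfl⟩
    refine ⟨γ⁻¹, ?_⟩
    show p = (ρ γ⁻¹⁻¹ (ρ γ⁻¹ p.1), a γ⁻¹ (a γ p.2))
    rw [inv_inv, ← hρm, ← ham, inv_mul_cancel, hρ1, ha1]
  · rintro p q s ⟨γ, rfl⟩ ⟨γ', rfl⟩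
    refine ⟨γ' * γ, ?_⟩
    show (ρ γ'⁻¹ (ρ γ⁻¹ p.1), a γ' (a γ p.2)) = _
    rw [← hρm, ← ham, mul_inv_rev]

theorem atrel_of_quot_eq (hρ1 : ∀ x, ρ 1 x = x)
    (hρm : ∀ γ γ' : Γ, ∀ x, ρ (γ * γ') x = ρ γ' (ρ γ x))
    (ha1 : ∀ v, a 1 v = v) (ham : ∀ γ γ' : Γ, ∀ v, a (γ * γ') v = a γ (a γ' v))
    {p q : VT × VK} (hpq : Quot.mk (ATrel ρ a) p = Quot.mk (ATrel ρ a) q) :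
    ATrel ρ a p q :=
  ((atrel_equivalence hρ1 hρm ha1 ham).eqvGen_iff).1 (Quot.eq.1 hpq)

/-- Representative independence for an invariant vertex set. -/
theorem rep_mem (hρ1 : ∀ x, ρ 1 x = x)
    (hρm : ∀ γ γ' : Γ, ∀ x, ρ (γ * γ') x = ρ γ' (ρ γ x))
    (ha1 : ∀ v, a 1 v = v) (ham : ∀ γ γ' : Γ, ∀ v, a (γ * γ') v = a γ (a γ' v))
    {S : Set VK} (hS : ∀ γ : Γ, ∀ v ∈ S, a γ v ∈ S) {c : Quot (ATrel ρ a)}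
    (hc : ∃ p : VT × VK, Quot.mk (ATrel ρ a) p = c ∧ p.2 ∈ S)
    {q : VT × VK} (hq : Quot.mk (ATrel ρ a) q = c) : q.2 ∈ S := by
  obtain ⟨p, hp, hpS⟩ := hc
  obtain ⟨γ, rfl⟩ := atrel_of_quot_eq hρ1 hρm ha1 ham (hp.trans hq.symm)
  exact hS γ _ hpS

/-- The lift of a multi-map to the quotient graph. -/
def mhLift (ρ : Γ → VT → VT) (a : Γ → VK → VK) (A : Cplx VK) (η : VK → Set VK) :
    ↥(ATverts ρ a A) → Set ↥(ATverts ρ a A) := fun c =>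
  {d | ∃ p : VT × VK, Quot.mk (ATrel ρ a) p = ↑c ∧
    ∃ w ∈ η p.2, Quot.mk (ATrel ρ a) (p.1, w) = ↑d}

theorem mhLift_rep (hρ1 : ∀ x, ρ 1 x = x)
    (hρm : ∀ γ γ' : Γ, ∀ x, ρ (γ * γ') x = ρ γ' (ρ γ x))
    (ha1 : ∀ v, a 1 v = v) (ham : ∀ γ γ' : Γ, ∀ v, a (γ * γ') v = a γ (a γ' v))
    {A : Cplx VK} {η : VK → Set VK}
    (hηeq : ∀ γ : Γ, ∀ v ∈ A.verts, η (a γ v) = (a γ) '' (η v))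
    {c d : ↥(ATverts ρ a A)} {p : VT × VK} (hp : Quot.mk (ATrel ρ a) p = ↑c)
    (hpA : p.2 ∈ A.verts) :
    d ∈ mhLift ρ a A η c ↔ ∃ w ∈ η p.2, Quot.mk (ATrel ρ a) (p.1, w) = ↑d := by
  constructor
  · rintro ⟨q, hq, w', hw', hd⟩
    obtain ⟨γ, rfl⟩ := atrel_of_quot_eq hρ1 hρm ha1 ham (hp.trans hq.symm)
    rw [hηeq γ p.2 hpA] at hw'
    obtain ⟨w, hw, rfl⟩ := hw'
    refine ⟨w, hw, ?_⟩
    rw [← hd]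
    exact Quot.sound ⟨γ, rfl⟩
  · rintro ⟨w, hw, hd⟩
    exact ⟨p, hp, w, hw, hd⟩

end AuxNDR

/-- Let Γ be a finite group and T a right Γ-graph.  If (K,L) is an r-NDR pair
of Γ-simplicial complexes, then (A_T(K), A_T(L)) is an r-NDR pair of graphs. -/
theorem AT_graphNDRPair_of_isNDRPair {Γ VT VK : Type*} [Group Γ] [Finite Γ]
    (T : SymGraph VT) (ρ : Γ → VT → VT) (hT : IsRightGraphAction Γ T ρ)
    (K L : Cplx VK) (a : Γ → VK → VK) (ha : IsCplxAction Γ a K)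
    (haL : ∀ γ : Γ, ∀ σ ∈ L.faces, (a γ) '' σ ∈ L.faces) (hLK : L.faces ⊆ K.faces)
    (r : ℕ) (hr : 1 ≤ r) (h : IsNDRPair Γ a K L r) :
    GraphNDRPair (ATgraph T ρ K a) (ATsubgraph T ρ K a L hLK) r := by
  obtain ⟨hρ1, hρm, -⟩ := hT
  obtain ⟨ha1, ham, haK⟩ := ha
  obtain ⟨A, hAK, hLA, hAinv, hνA, f, hfDef, hfZig, hfim⟩ := h
  have hAv : ∀ γ : Γ, ∀ v ∈ A.verts, a γ v ∈ A.verts := by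
    intro γ v hv
    have := hAinv γ {v} hv
    rwa [Set.image_singleton] at this
  have hLv : ∀ γ : Γ, ∀ v ∈ L.verts, a γ v ∈ L.verts := by
    intro γ v hv
    have := haL γ {v} hv
    rwa [Set.image_singleton] at this
  have hNv : ∀ s : ℕ, ∀ γ : Γ, ∀ v ∈ (nbhdIter K L s).verts,
      a γ v ∈ (nbhdIter K L s).verts := by
    intro s
    induction s with
    | zero => exact hLv
    | succ s ih =>
      intro γ v hv
      obtain ⟨u, hu, hins⟩ := hv
      refine ⟨a γ u, ih γ u hu, ?_⟩
      have := haK γ _ hins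
      rwa [Set.image_insert_eq, Set.image_singleton] at this
  have hLAv : L.verts ⊆ A.verts := fun v hv => hLA hv
  have hGv : ∀ s : ℕ, (gnbhdIter (ATgraph T ρ K a) (ATsubgraph T ρ K a L hLK) s).verts
      ⊆ ATverts ρ a (nbhdIter K L s) := by
    intro s
    induction s with
    | zero => exact fun c hc => hc
    | succ s ih =>
      rintro c ⟨d, hd, p, q, hp, hq, hTpq, hKpq⟩
      have hq2 : q.2 ∈ (nbhdIter K L s).verts :=
        rep_mem hρ1 hρm ha1 ham (hNv s) (ih hd) hq
      refine ⟨p, hp, q.2, hq2, ?_⟩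
      rwa [Set.pair_comm] at hKpq
  have hrepA : ∀ (c : ↥(ATverts ρ a A)) {p : VT × VK},
      Quot.mk (ATrel ρ a) p = ↑c → p.2 ∈ A.verts :=
    fun c {p} hp => rep_mem hρ1 hρm ha1 ham hAv c.2 hp
  refine ⟨ATsubgraph T ρ K a A hAK, ⟨?_, ?_⟩, ⟨?_, ?_⟩, ?_⟩
  · rintro c ⟨p, hp, hpL⟩
    exact ⟨p, hp, hLAv hpL⟩
  · rintro c d ⟨p, q, hp, hq, hTpq, hLpq⟩
    exact ⟨p, q, hp, hq, hTpq, hLA hLpq⟩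
  · -- iterated neighborhood vertices
    intro c hc
    obtain ⟨p, hp, hp2⟩ := hGv r hc
    exact ⟨p, hp, hνA hp2⟩
  · -- iterated neighborhood edges
    obtain ⟨s, rfl⟩ : ∃ s, r = s + 1 := ⟨r - 1, (Nat.succ_pred_eq_of_pos hr).symm⟩
    rintro c d ⟨⟨p, q, hp, hq, hTpq, hKpq⟩, hor⟩
    rcases hor with hc | hd
    · have hp2 : p.2 ∈ (nbhdIter K L s).verts :=
        rep_mem hρ1 hρm ha1 ham (hNv s) (hGv s hc) hp
      refine ⟨p, q, hp, hq, hTpq, hνA ⟨p.2, hp2, ?_⟩⟩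
      have he : insert p.2 ({p.2, q.2} : Set VK) = {p.2, q.2} :=
        Set.insert_eq_self.2 (Set.mem_insert _ _)
      rw [he]
      exact hKpq
    · have hq2 : q.2 ∈ (nbhdIter K L s).verts :=
        rep_mem hρ1 hρm ha1 ham (hNv s) (hGv s hd) hq
      refine ⟨p, q, hp, hq, hTpq, hνA ⟨q.2, hq2, ?_⟩⟩
      have he : insert q.2 ({p.2, q.2} : Set VK) = {p.2, q.2} :=
        Set.insert_eq_self.2 (Set.mem_insert_iff.2 (Or.inr rfl))
      rw [he]
      exact hKpq
  · -- the retract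
    have hDef : ∀ η : VK → Set VK, IsDefMultiMap Γ a A L η →
        IsDefMultiHom (ATsubgraph T ρ K a A hAK).coe
          {x : ↥(ATverts ρ a A) | (x : Quot (ATrel ρ a)) ∈ ATverts ρ a L}
          (mhLift ρ a A η) := by
      intro η hη
      obtain ⟨⟨⟨hne, hfaces⟩, heq⟩, hfix⟩ := hη
      have hsub : ∀ v ∈ A.verts, η v ⊆ A.verts := by
        intro v hv w hw
        have h1 : η v ∈ A.faces := by
          have := hfaces {v} hv
          rwa [Set.biUnion_singleton] at this
        exact A.down_closed _ h1 _ (Set.singleton_subset_iff.2 hw)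
      refine ⟨⟨?_, ?_⟩, ?_⟩
      · intro c
        obtain ⟨p, hp, hpA⟩ := c.2
        obtain ⟨w, hw⟩ := hne p.2 hpA
        exact ⟨⟨Quot.mk _ (p.1, w), ⟨(p.1, w), rfl, hsub _ hpA hw⟩⟩, p, hp, w, hw, rfl⟩
      · rintro c d ⟨p, q, hp, hq, hTpq, hApq⟩ x hx y hy
        have hpA := hrepA c hp
        have hqA := hrepA d hq
        replace hx := (mhLift_rep hρ1 hρm ha1 ham heq hp hpA).1 hx
        replace hy := (mhLift_rep hρ1 hρm ha1 ham heq hq hqA).1 hy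
        obtain ⟨w, hw, hxw⟩ := hx
        obtain ⟨z, hz, hyz⟩ := hy
        have hpair : ({w, z} : Set VK) ∈ A.faces := by
          have h2 : (⋃ v ∈ ({p.2, q.2} : Set VK), η v) ∈ A.faces := hfaces _ hApq
          rw [Set.biUnion_pair] at h2
          refine A.down_closed _ h2 _ ?_
          rintro u hu
          rcases hu with rfl | hu
          · exact Or.inl hw
          · rw [Set.mem_singleton_iff] at hu
            subst hu
            exact Or.inr hz
        exact ⟨(p.1, w), (q.1, z), hxw, hyz, hTpq, hpair⟩
      · intro c hc
        have hcL : ∀ {p : VT × VK}, Quot.mk (ATrel ρ a) p = ↑c → p.2 ∈ L.verts :=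
          fun {p} hp => rep_mem hρ1 hρm ha1 ham hLv hc hp
        ext d
        change (d ∈ mhLift ρ a A η c) ↔ d = c
        constructor
        · rintro ⟨p, hp, w, hw, hd⟩
          rw [hfix p.2 (hcL hp), Set.mem_singleton_iff] at hw
          subst hw
          exact Subtype.ext (hd.symm.trans hp)
        · rintro rfl
          obtain ⟨p, hp, hpL⟩ := hc
          exact ⟨p, hp, p.2, by rw [hfix p.2 hpL]; exact Set.mem_singleton _, hp⟩
    have hmono : ∀ η η' : VK → Set VK, mmLE A η η' →
        ∀ c, mhLift ρ a A η c ⊆ mhLift ρ a A η' c := by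
      rintro η η' hle c d ⟨p, hp, w, hw, hd⟩
      exact ⟨p, hp, w, hle p.2 (hrepA c hp) hw, hd⟩
    have hstep : ∀ η η' : VK → Set VK, cplxDefStep Γ a A L η η' →
        defMHStep (ATsubgraph T ρ K a A hAK).coe
          {x : ↥(ATverts ρ a A) | (x : Quot (ATrel ρ a)) ∈ ATverts ρ a L}
          (mhLift ρ a A η) (mhLift ρ a A η') := by
      rintro η η' ⟨h1, h2, h3 | h3⟩
      · exact ⟨hDef η h1, hDef η' h2, Or.inl (hmono _ _ h3)⟩
      · exact ⟨hDef η h1, hDef η' h2, Or.inr (hmono _ _ h3)⟩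
    have hid : mhLift ρ a A (fun v => ({v} : Set VK)) = fun c => {c} := by
      funext c
      ext d
      simp only [Set.mem_singleton_iff]
      constructor
      · rintro ⟨p, hp, w, hw, hd⟩
        rw [Set.mem_singleton_iff] at hw
        subst hw
        exact Subtype.ext (hd.symm.trans hp)
      · rintro rfl
        obtain ⟨p, hp⟩ := Quot.exists_rep (↑d : Quot (ATrel ρ a))
        exact ⟨p, hp, p.2, Set.mem_singleton _, hp⟩
    have hfL : ∀ v ∈ A.verts, f v ∈ L.verts := by
      intro v hv
      have := hfim {v} hv
      rwa [Set.image_singleton] at this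
    have hFex : ∀ c : ↥(ATverts ρ a A), ∃ d : ↥(ATverts ρ a A),
        ∃ p : VT × VK, Quot.mk (ATrel ρ a) p = ↑c ∧
          Quot.mk (ATrel ρ a) (p.1, f p.2) = ↑d ∧ f p.2 ∈ L.verts := by
      intro c
      obtain ⟨p, hp, hpA⟩ := c.2
      exact ⟨⟨Quot.mk _ (p.1, f p.2), ⟨(p.1, f p.2), rfl, hLAv (hfL _ hpA)⟩⟩,
        p, hp, rfl, hfL _ hpA⟩
    choose F hF using hFex
    have hFlift : mhLift ρ a A (fun v => ({f v} : Set VK)) = fun c => {F c} := by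
      funext c
      obtain ⟨p, hp, hd, hfpL⟩ := hF c
      have hpA := hrepA c hp
      ext x
      rw [Set.mem_singleton_iff, mhLift_rep hρ1 hρm ha1 ham hfDef.1.2 hp hpA]
      constructor
      · rintro ⟨w, hw, hx⟩
        rw [Set.mem_singleton_iff] at hw
        subst hw
        exact Subtype.ext (hx.symm.trans hd)
      · rintro rfl
        exact ⟨f p.2, Set.mem_singleton _, hd⟩
    refine ⟨F, ?_, ?_, ?_⟩
    · have h1 := hDef _ hfDef
      rw [hFlift] at h1
      exact h1
    · have := Relation.ReflTransGen.lift (mhLift ρ a A) hstep _ _ hfZig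
      dsimp only [Function.onFun] at this
      rwa [hid, hFlift] at this
    · intro c
      obtain ⟨p, hp, hd, hfpL⟩ := hF c
      exact ⟨(p.1, f p.2), hd, hfpL⟩
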